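/- Let Λ ⊂ ℝ be open and γ ∈ ℝ. Suppose that for each j ∈ {0, …, N−1} there is a continuous function 𝒞_j : Λ → M₂(ℝ) such that a_{(k+1)N+j−1}·(X_{kN+j}(λ) − γ·Id) → 𝒞_j(λ) as k → ∞, uniformly in λ on every compact subset of Λ. If discr(𝒞_j(λ)) < 0 for all j ∈ {0,…,N−1} and all λ ∈ Λ, then for every compact set K ⊂ Λ there exist c ≥ 1 and M ≥ 1 such that for all v ∈ ℝ², all λ ∈ K and all n ≥ M: c⁻¹·‖v‖² ≤ |Q_n^λ(v)| ≤ c·‖v‖². -/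

import Mathlib

open Filter Matrix
open scoped Matrix

/-- The product `C (n₀ + len - 1) * ⋯ * C n₀` of real matrices, larger indices on the left. -/
noncomputable def prodDescN (C : ℕ → Matrix (Fin 2) (Fin 2) ℝ) (n₀ : ℕ) :
    ℕ → Matrix (Fin 2) (Fin 2) ℝ
  | 0 => 1
  | len + 1 => C (n₀ + len) * prodDescN C n₀ len

/-- The quadratic form `⟨E C v, v⟩` written out in coordinates. -/
def stmt14.qf (C : Matrix (Fin 2) (Fin 2) ℝ) (x y : ℝ) : ℝ :=
  -(C 1 0) * x^2 + (C 0 0 - C 1 1) * x * y + C 0 1 * y^2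

namespace stmt14

lemma qf_eq (M : Matrix (Fin 2) (Fin 2) ℝ) (v : Fin 2 → ℝ) :
    (((!![0, -1; 1, 0] : Matrix (Fin 2) (Fin 2) ℝ) * M).mulVec v) ⬝ᵥ v
      = qf M (v 0) (v 1) := by
  simp [qf, Matrix.mul_apply, Matrix.mulVec, dotProduct, Fin.sum_univ_two]
  ring

lemma qf_smul (aa g : ℝ) (M : Matrix (Fin 2) (Fin 2) ℝ) (x y : ℝ) :
    qf (aa • (M - g • (1 : Matrix (Fin 2) (Fin 2) ℝ))) x y = aa * qf M x y := by
  simp [qf, Matrix.smul_apply, Matrix.sub_apply, Matrix.one_fin_two]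
  ring

lemma qf_scale (C : Matrix (Fin 2) (Fin 2) ℝ) (x y t : ℝ) (ht : t ≠ 0)
    (ht2 : t^2 = x^2+y^2) : qf C x y = (x^2+y^2) * qf C (x/t) (y/t) := by
  have hne : x^2 + y^2 ≠ 0 := by rw [← ht2]; positivity
  have key : qf C (x/t) (y/t) = qf C x y / (x^2+y^2) := by
    rw [← ht2]; simp only [qf]; field_simp
  rw [key, mul_div_cancel₀ _ hne]

lemma qf_ne_zero (C : Matrix (Fin 2) (Fin 2) ℝ)
    (hd : (C.trace)^2 - 4 * C.det < 0) (x y : ℝ) (hxy : x^2 + y^2 = 1) :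
    qf C x y ≠ 0 := by
  rw [Matrix.trace_fin_two, Matrix.det_fin_two] at hd
  intro h0
  obtain ⟨α, β, ζ, hα, hβ, hζ⟩ : ∃ α β ζ : ℝ, α = -(C 1 0) ∧ β = C 0 0 - C 1 1 ∧ ζ = C 0 1 :=
    ⟨_, _, _, rfl, rfl, rfl⟩
  subst hα
  subst hβ
  subst hζ
  have hd' : (C 0 0 - C 1 1)^2 - 4*(-(C 1 0))*(C 0 1) < 0 := by nlinarith [hd]
  have h0' : (-(C 1 0))*x^2 + (C 0 0 - C 1 1)*x*y + (C 0 1)*y^2 = 0 := by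
    simpa only [qf] using h0
  have h1 : (2*(-(C 1 0))*x + (C 0 0 - C 1 1)*y)^2
      = ((C 0 0 - C 1 1)^2 - 4*(-(C 1 0))*(C 0 1))*y^2 := by
    linear_combination 4*(-(C 1 0))*h0'
  have h2 : (2*(C 0 1)*y + (C 0 0 - C 1 1)*x)^2
      = ((C 0 0 - C 1 1)^2 - 4*(-(C 1 0))*(C 0 1))*x^2 := by
    linear_combination 4*(C 0 1)*h0'
  have hy : y^2 ≤ 0 := by nlinarith [sq_nonneg (2*(-(C 1 0))*x + (C 0 0 - C 1 1)*y)]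
  have hx : x^2 ≤ 0 := by nlinarith [sq_nonneg (2*(C 0 1)*y + (C 0 0 - C 1 1)*x)]
  nlinarith [sq_nonneg x, sq_nonneg y]

lemma qdiff (d10 d00 d11 d01 x y e : ℝ)
    (h1 : |d10| ≤ e) (h2 : |d00| ≤ e) (h3 : |d11| ≤ e) (h4 : |d01| ≤ e) :
    |(-d10*x^2 + (d00-d11)*x*y + d01*y^2)| ≤ 2*e*(x^2+y^2) := by
  have he : 0 ≤ e := le_trans (abs_nonneg _) h1
  obtain ⟨h1a, h1b⟩ := abs_le.mp h1
  obtain ⟨h2a, h2b⟩ := abs_le.mp h2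
  obtain ⟨h3a, h3b⟩ := abs_le.mp h3
  obtain ⟨h4a, h4b⟩ := abs_le.mp h4
  rw [abs_le]
  constructor <;> nlinarith [
    mul_nonneg (by linarith : (0:ℝ) ≤ e + d10) (sq_nonneg x),
    mul_nonneg (by linarith : (0:ℝ) ≤ e - d10) (sq_nonneg x),
    mul_nonneg (by linarith : (0:ℝ) ≤ e + d01) (sq_nonneg y),
    mul_nonneg (by linarith : (0:ℝ) ≤ e - d01) (sq_nonneg y),
    mul_nonneg (by linarith : (0:ℝ) ≤ 2*e - (d00 - d11)) (sq_nonneg (x+y)),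
    mul_nonneg (by linarith : (0:ℝ) ≤ 2*e + (d00 - d11)) (sq_nonneg (x-y)),
    mul_nonneg (by linarith : (0:ℝ) ≤ 2*e - (d00 - d11)) (sq_nonneg (x-y)),
    mul_nonneg (by linarith : (0:ℝ) ≤ 2*e + (d00 - d11)) (sq_nonneg (x+y))]

lemma sphere_cpt : IsCompact {p : ℝ × ℝ | p.1^2 + p.2^2 = 1} := by
  have hclosed : IsClosed {p : ℝ × ℝ | p.1^2 + p.2^2 = 1} :=
    isClosed_eq (by continuity) continuous_const
  refine Metric.isCompact_of_isClosed_isBounded hclosed ?_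
  rw [Metric.isBounded_iff_subset_closedBall 0]
  refine ⟨1, fun p hp => ?_⟩
  simp only [Metric.mem_closedBall, dist_zero_right, Prod.norm_def, Real.norm_eq_abs]
  simp only [Set.mem_setOf_eq] at hp
  refine max_le ?_ ?_ <;> rw [abs_le] <;> constructor <;> nlinarith [sq_nonneg p.1, sq_nonneg p.2]

end stmt14

open stmt14 in
theorem stmt14 (N : ℕ) (hN : 1 ≤ N)
    (a b : ℕ → ℝ) (hapos : ∀ n, 0 < a n)
    (Λ : Set ℝ) (hΛ : IsOpen Λ) (γ : ℝ)
    -- `X n lam` is the matrix `X_n(λ) = B_{n+N-1}(λ) ⋯ B_n(λ)`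
    (X : ℕ → ℝ → Matrix (Fin 2) (Fin 2) ℝ)
    (hX : ∀ (n : ℕ) (lam : ℝ), X n lam =
      prodDescN (fun k => !![0, 1; -(a (k - 1) / a k), (lam - b k) / a k]) n N)
    (Cl : ℕ → ℝ → Matrix (Fin 2) (Fin 2) ℝ)
    (hcont : ∀ j < N, ContinuousOn (Cl j) Λ)
    (hconv : ∀ j < N, ∀ K ⊆ Λ, IsCompact K → TendstoUniformlyOn
      (fun k lam => a ((k + 1) * N + j - 1) • (X (k * N + j) lam
        - γ • (1 : Matrix (Fin 2) (Fin 2) ℝ))) (Cl j) atTop K)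
    (hdiscr : ∀ j < N, ∀ lam ∈ Λ, ((Cl j lam).trace) ^ 2 - 4 * (Cl j lam).det < 0) :
    ∀ K ⊆ Λ, IsCompact K → ∃ c : ℝ, 1 ≤ c ∧ ∃ M : ℕ, 1 ≤ M ∧
      ∀ v : Fin 2 → ℝ, ∀ lam ∈ K, ∀ n : ℕ, M ≤ n →
        c⁻¹ * (v 0 ^ 2 + v 1 ^ 2)
            ≤ |a (n + N - 1) * ((((!![0, -1; 1, 0] : Matrix (Fin 2) (Fin 2) ℝ)
                * X n lam).mulVec v) ⬝ᵥ v)| ∧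
          |a (n + N - 1) * ((((!![0, -1; 1, 0] : Matrix (Fin 2) (Fin 2) ℝ)
                * X n lam).mulVec v) ⬝ᵥ v)| ≤ c * (v 0 ^ 2 + v 1 ^ 2) := by
  intro K hKΛ hK
  rcases K.eq_empty_or_nonempty with hKe | hKne
  · refine ⟨1, le_rfl, 1, le_rfl, fun v lam hlam => ?_⟩
    rw [hKe] at hlam
    exact absurd hlam (Set.notMem_empty lam)
  -- The key estimate, uniformly in each residue class `j` mod `N`.
  have key : ∀ j : Fin N, ∃ δ : ℝ, 0 < δ ∧ ∃ D : ℝ, ∃ M0 : ℕ,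
      ∀ k, M0 ≤ k → ∀ lam ∈ K, ∀ x y : ℝ,
        δ * (x^2 + y^2) ≤ |a ((k+1)*N + (j:ℕ) - 1) * qf (X (k*N + (j:ℕ)) lam) x y| ∧
        |a ((k+1)*N + (j:ℕ) - 1) * qf (X (k*N + (j:ℕ)) lam) x y| ≤ D * (x^2+y^2) := by
    intro j
    have hj : (j : ℕ) < N := j.2
    set Sp : Set (ℝ × ℝ) := {p | p.1^2 + p.2^2 = 1} with hSp
    set T : Set (ℝ × (ℝ × ℝ)) := K ×ˢ Sp with hT
    have hTc : IsCompact T := hK.prod sphere_cpt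
    have hTne : T.Nonempty := hKne.prod ⟨(1, 0), by simp [hSp]⟩
    -- continuity of the quadratic form of `Cl j` on `T`
    have hC : ∀ i i' : Fin 2, ContinuousOn (fun p : ℝ × (ℝ × ℝ) => Cl (j:ℕ) p.1 i i') T := by
      intro i i'
      have h2 : Continuous (fun M : Matrix (Fin 2) (Fin 2) ℝ => M i i') := by fun_prop
      have h1 : ContinuousOn (fun lam => Cl (j:ℕ) lam i i') Λ :=
        h2.comp_continuousOn (hcont _ hj)
      exact h1.comp continuousOn_fst (fun p hp => hKΛ hp.1)
    have hx2 : ContinuousOn (fun p : ℝ × (ℝ × ℝ) => p.2.1) T := by fun_prop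
    have hy2 : ContinuousOn (fun p : ℝ × (ℝ × ℝ) => p.2.2) T := by fun_prop
    have hgc : ContinuousOn (fun p : ℝ × (ℝ × ℝ) => |qf (Cl (j:ℕ) p.1) p.2.1 p.2.2|) T := by
      apply ContinuousOn.abs
      simp only [qf]
      exact ((((hC 1 0).neg.mul (hx2.pow 2)).add
        ((((hC 0 0).sub (hC 1 1)).mul hx2).mul hy2)).add ((hC 0 1).mul (hy2.pow 2)))
    have hgpos : ∀ p ∈ T, 0 < |qf (Cl (j:ℕ) p.1) p.2.1 p.2.2| := by
      rintro ⟨lam, x, y⟩ ⟨hlam, hxy⟩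
      rw [abs_pos]
      exact qf_ne_zero _ (hdiscr _ hj lam (hKΛ hlam)) x y hxy
    obtain ⟨p₀, hp₀T, hp₀min'⟩ := hTc.exists_isMinOn hTne hgc
    obtain ⟨p₁, hp₁T, hp₁max'⟩ := hTc.exists_isMaxOn hTne hgc
    have hp₀min := isMinOn_iff.mp hp₀min'
    have hp₁max := isMaxOn_iff.mp hp₁max'
    set δ : ℝ := |qf (Cl (j:ℕ) p₀.1) p₀.2.1 p₀.2.2| with hδdef
    set D : ℝ := |qf (Cl (j:ℕ) p₁.1) p₁.2.1 p₁.2.2| with hDdef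
    have hδ : 0 < δ := hgpos p₀ hp₀T
    -- bounds on the limiting quadratic form for all vectors
    have hsphere : ∀ lam ∈ K, ∀ x y : ℝ,
        δ * (x^2+y^2) ≤ |qf (Cl (j:ℕ) lam) x y| ∧
        |qf (Cl (j:ℕ) lam) x y| ≤ D * (x^2+y^2) := by
      intro lam hlam x y
      rcases eq_or_ne (x^2 + y^2) 0 with h0 | h0
      · have hx0 : x = 0 := by nlinarith [sq_nonneg x, sq_nonneg y]
        have hy0 : y = 0 := by nlinarith [sq_nonneg x, sq_nonneg y]
        simp [qf, hx0, hy0]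
      · have hpos : 0 < x^2 + y^2 := lt_of_le_of_ne (by positivity) (Ne.symm h0)
        set t := Real.sqrt (x^2+y^2) with htdef
        have ht : 0 < t := Real.sqrt_pos.mpr hpos
        have ht2 : t^2 = x^2 + y^2 := Real.sq_sqrt hpos.le
        have hu : (x/t)^2 + (y/t)^2 = 1 := by
          field_simp
          linarith [ht2]
        have hmem : (lam, (x/t, y/t)) ∈ T := ⟨hlam, hu⟩
        have hq : |qf (Cl (j:ℕ) lam) x y|
            = (x^2+y^2) * |qf (Cl (j:ℕ) lam) (x/t) (y/t)| := by
          rw [qf_scale _ x y t ht.ne' ht2, abs_mul, abs_of_pos hpos]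
        constructor
        · rw [hq]
          have := hp₀min _ hmem
          nlinarith [this, hpos]
        · rw [hq]
          have := hp₁max _ hmem
          nlinarith [this, hpos]
      -- uniform convergence: entrywise closeness
    have hent : ∀ i i' : Fin 2, ∀ᶠ k in atTop, ∀ lam ∈ K,
        |(a ((k+1)*N + (j:ℕ) - 1) • (X (k*N + (j:ℕ)) lam
            - γ • (1 : Matrix (Fin 2) (Fin 2) ℝ))) i i' - Cl (j:ℕ) lam i i'| < δ/8 := by
      intro i i'
      have huc : UniformContinuous (fun M : Matrix (Fin 2) (Fin 2) ℝ => M i i') :=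
        (Pi.uniformContinuous_proj _ i').comp (Pi.uniformContinuous_proj _ i)
      have h := huc.comp_tendstoUniformlyOn (hconv (j:ℕ) hj K hKΛ hK)
      rw [Metric.tendstoUniformlyOn_iff] at h
      filter_upwards [h (δ/8) (by positivity)] with k hk lam hlam
      have := hk lam hlam
      rw [Real.dist_eq, abs_sub_comm] at this
      exact this
    have hall : ∀ᶠ k in atTop, ∀ lam ∈ K, ∀ i i' : Fin 2,
        |(a ((k+1)*N + (j:ℕ) - 1) • (X (k*N + (j:ℕ)) lam
            - γ • (1 : Matrix (Fin 2) (Fin 2) ℝ))) i i' - Cl (j:ℕ) lam i i'| < δ/8 := by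
      filter_upwards [hent 0 0, hent 0 1, hent 1 0, hent 1 1] with k h1 h2 h3 h4
      intro lam hlam i i'
      fin_cases i <;> fin_cases i' <;> [exact h1 lam hlam; exact h2 lam hlam;
        exact h3 lam hlam; exact h4 lam hlam]
    obtain ⟨M0, hM0⟩ := eventually_atTop.mp hall
    refine ⟨δ/2, by positivity, D + δ, M0, fun k hk lam hlam x y => ?_⟩
    set A : Matrix (Fin 2) (Fin 2) ℝ :=
      a ((k+1)*N + (j:ℕ) - 1) • (X (k*N + (j:ℕ)) lam - γ • (1 : Matrix (Fin 2) (Fin 2) ℝ))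
      with hA
    have hAq : a ((k+1)*N + (j:ℕ) - 1) * qf (X (k*N + (j:ℕ)) lam) x y = qf A x y :=
      (qf_smul _ _ _ _ _).symm
    have hentk := hM0 k hk lam hlam
    have hdiff : |qf A x y - qf (Cl (j:ℕ) lam) x y| ≤ 2 * (δ/8) * (x^2+y^2) := by
      have heq : qf A x y - qf (Cl (j:ℕ) lam) x y
          = -(A 1 0 - Cl (j:ℕ) lam 1 0) * x^2
            + ((A 0 0 - Cl (j:ℕ) lam 0 0) - (A 1 1 - Cl (j:ℕ) lam 1 1)) * x * y
            + (A 0 1 - Cl (j:ℕ) lam 0 1) * y^2 := by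
        simp only [qf]; ring
      rw [heq]
      exact qdiff _ _ _ _ x y _ (hentk 1 0).le (hentk 0 0).le (hentk 1 1).le (hentk 0 1).le
    obtain ⟨hlow, hhigh⟩ := hsphere lam hlam x y
    rw [hAq]
    have habs1 := abs_sub_abs_le_abs_sub (qf A x y) (qf (Cl (j:ℕ) lam) x y)
    have habs2 := abs_sub_abs_le_abs_sub (qf (Cl (j:ℕ) lam) x y) (qf A x y)
    rw [abs_sub_comm] at habs2
    constructor
    · nlinarith [sq_nonneg x, sq_nonneg y, hδ]
    · nlinarith [sq_nonneg x, sq_nonneg y, hδ]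
  choose δ hδpos D M0 hkey using key
  have hne : (Finset.univ : Finset (Fin N)).Nonempty := ⟨⟨0, by omega⟩, Finset.mem_univ _⟩
  set c : ℝ := max 1 (Finset.univ.sup' hne fun j => max (δ j)⁻¹ (D j)) with hc
  have hc1 : (1:ℝ) ≤ c := le_max_left _ _
  have hc0 : (0:ℝ) < c := lt_of_lt_of_le one_pos hc1
  set S : ℕ := Finset.univ.sup M0 with hS
  have hMpos : 0 < N * (S + 1) := Nat.mul_pos (by omega) (Nat.succ_pos _)
  refine ⟨c, hc1, N * (S + 1), by omega, ?_⟩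
  intro v lam hlam n hn
  obtain ⟨k, jv, hjN, rfl⟩ : ∃ k jv, jv < N ∧ n = k * N + jv :=
    ⟨n / N, n % N, Nat.mod_lt n (by omega), by
      rw [Nat.mul_comm]; exact (Nat.div_add_mod n N).symm⟩
  set j : Fin N := ⟨jv, hjN⟩ with hjdef
  have hk : M0 j ≤ k := by
    have hsup : M0 j ≤ S := Finset.le_sup (Finset.mem_univ j)
    by_contra h
    push_neg at h
    have hlt : k * N + jv < N * (S + 1) := by
      calc k * N + jv < k * N + N := by omega
        _ = (k + 1) * N := by ring
        _ ≤ (S + 1) * N := Nat.mul_le_mul_right _ (by omega)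
        _ = N * (S + 1) := Nat.mul_comm _ _
    omega
  have hb := hkey j k hk lam hlam (v 0) (v 1)
  have hidx : (k+1)*N + (j:ℕ) - 1 = (k * N + jv) + N - 1 := by
    have h1 : (k+1)*N = k*N + N := by ring
    simp only [hjdef]
    omega
  rw [hidx] at hb
  rw [qf_eq]
  have hvnn : (0:ℝ) ≤ v 0 ^ 2 + v 1 ^ 2 := by positivity
  constructor
  · have hfj : max (δ j)⁻¹ (D j) ≤ Finset.univ.sup' hne fun i => max (δ i)⁻¹ (D i) :=
      Finset.le_sup' (fun i => max (δ i)⁻¹ (D i)) (Finset.mem_univ j)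
    have hcδ : (δ j)⁻¹ ≤ c := by
      rw [hc]
      exact le_trans (le_trans (le_max_left _ _) hfj) (le_max_right _ _)
    have hcinv : c⁻¹ ≤ δ j := by
      rw [inv_le_comm₀ hc0 (hδpos j)]
      exact hcδ
    calc c⁻¹ * (v 0 ^ 2 + v 1 ^ 2) ≤ δ j * (v 0 ^ 2 + v 1 ^ 2) :=
          mul_le_mul_of_nonneg_right hcinv hvnn
      _ ≤ _ := hb.1
  · have hfj : max (δ j)⁻¹ (D j) ≤ Finset.univ.sup' hne fun i => max (δ i)⁻¹ (D i) :=
      Finset.le_sup' (fun i => max (δ i)⁻¹ (D i)) (Finset.mem_univ j)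
    have hcD : D j ≤ c := by
      rw [hc]
      exact le_trans (le_trans (le_max_right _ _) hfj) (le_max_right _ _)
    calc _ ≤ D j * (v 0 ^ 2 + v 1 ^ 2) := hb.2
      _ ≤ c * (v 0 ^ 2 + v 1 ^ 2) := mul_le_mul_of_nonneg_right hcD hvnn
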